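/- Let E be a separable Fréchet space and T ∈ L(E) a power bounded operator admitting a fundamental increasing sequence of seminorms {q_j} with q_j(Tⁿx) ≤ q_j(x) for all j, n, x. Then the set of unimodular eigenvalues σ_p(T) ∩ {λ ∈ ℂ : |λ| = 1} is at most countable. -/

import Mathlib

open Complex Real

private lemma circle_lemma {μ : ℂ} (hμ : ‖μ‖ = 1) (hne : μ ≠ 1) :
    ∃ n : ℕ, 1 ≤ n ∧ 1 ≤ ‖(1 : ℂ) - μ ^ n‖ := by
  have habs : ‖μ‖ = 1 := hμ
  set t := μ.arg with ht
  have hμe : μ = Complex.exp (t * Complex.I) := by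
    conv_lhs => rw [← Complex.norm_mul_exp_arg_mul_I μ]
    rw [habs]; simp [ht]
  have htne : t ≠ 0 := by
    intro h
    apply hne
    rw [hμe, h]; simp
  set s := |t| with hs
  have hs0 : 0 < s := abs_pos.mpr htne
  have hsle : s ≤ π := abs_le.mpr ⟨(Complex.neg_pi_lt_arg μ).le, Complex.arg_le_pi μ⟩
  set n := ⌈(π / 2) / s⌉₊ with hn
  have hpi2 : (0 : ℝ) < π / 2 := by positivity
  have hn1 : 1 ≤ n := Nat.one_le_ceil_iff.mpr (div_pos hpi2 hs0)
  have hge : π / 2 ≤ n * s := by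
    rw [← div_le_iff₀ hs0]
    exact Nat.le_ceil _
  have hlt : n * s ≤ π + π / 2 := by
    have h1 : (n : ℝ) < (π / 2) / s + 1 := Nat.ceil_lt_add_one (by positivity)
    have h2 : (n : ℝ) * s < ((π / 2) / s + 1) * s := by nlinarith
    have h3 : ((π / 2) / s + 1) * s = π / 2 + s := by
      rw [add_mul, div_mul_cancel₀ _ hs0.ne', one_mul]
    nlinarith
  have hcos : Real.cos ((n : ℝ) * t) ≤ 0 := by
    have h1 : Real.cos ((n : ℝ) * s) ≤ 0 :=
      Real.cos_nonpos_of_pi_div_two_le_of_le hge hlt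
    have h2 : |(n : ℝ) * t| = (n : ℝ) * s := by
      rw [abs_mul, Nat.abs_cast]
    rw [← Real.cos_abs, h2]
    exact h1
  refine ⟨n, hn1, ?_⟩
  have hre : (μ ^ n).re = Real.cos ((n : ℝ) * t) := by
    rw [hμe, ← Complex.exp_nat_mul]
    have : (n : ℂ) * (↑t * Complex.I) = (↑((n : ℝ) * t)) * Complex.I := by
      push_cast; ring
    rw [this, Complex.exp_ofReal_mul_I_re]
  have h1 : (1 : ℝ) ≤ ((1 : ℂ) - μ ^ n).re := by
    simp only [Complex.sub_re, Complex.one_re, hre]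
    linarith
  calc (1 : ℝ) ≤ ((1 : ℂ) - μ ^ n).re := h1
    _ ≤ |((1 : ℂ) - μ ^ n).re| := le_abs_self _
    _ ≤ ‖(1 : ℂ) - μ ^ n‖ := Complex.abs_re_le_norm _

private lemma sep_lemma {E : Type*} [AddCommGroup E] [Module ℂ E] [TopologicalSpace E]
    (p : Seminorm ℂ E) (T : E →L[ℂ] E) (hT : ∀ (n : ℕ) (x : E), p ((T ^ n) x) ≤ p x)
    {l1 l2 : ℂ} (h1 : ‖l1‖ = 1) (h2 : ‖l2‖ = 1) (hne : l1 ≠ l2)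
    {x1 x2 : E} (hx1 : T x1 = l1 • x1) (hx2 : T x2 = l2 • x2)
    (hp1 : p x1 = 1) (hp2 : p x2 = 1) : 1 / 2 ≤ p (x1 - x2) := by
  have hl1 : l1 ≠ 0 := by intro h; rw [h] at h1; simp at h1
  set μ := l2 / l1 with hμ
  have hμn : ‖μ‖ = 1 := by rw [hμ, norm_div, h1, h2]; norm_num
  have hμ1 : μ ≠ 1 := by
    intro h
    exact hne ((div_eq_one_iff_eq hl1).mp h).symm
  obtain ⟨n, hn1, hn⟩ := circle_lemma hμn hμ1
  have hiter : ∀ (l : ℂ) (x : E), T x = l • x → ∀ m : ℕ, (T ^ m) x = l ^ m • x := by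
    intro l x hx m
    induction m with
    | zero => simp
    | succ k ih =>
      rw [pow_succ, ContinuousLinearMap.mul_apply, hx, map_smul, ih, smul_smul,
        mul_comm, ← pow_succ]
  have e1 : (T ^ n) (x1 - x2) = l1 ^ n • (x1 - μ ^ n • x2) := by
    rw [map_sub, hiter l1 x1 hx1 n, hiter l2 x2 hx2 n, smul_sub, smul_smul]
    congr 2
    rw [hμ, div_pow, mul_div_cancel₀]
    exact pow_ne_zero _ hl1
  have hnl1 : ‖l1 ^ n‖ = 1 := by rw [norm_pow, h1, one_pow]
  have e2 : p ((T ^ n) (x1 - x2)) = p (x1 - μ ^ n • x2) := by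
    rw [e1, map_smul_eq_mul, hnl1, one_mul]
  have e3 : p (x2 - μ ^ n • x2) = ‖(1 : ℂ) - μ ^ n‖ := by
    have : x2 - μ ^ n • x2 = ((1 : ℂ) - μ ^ n) • x2 := by
      rw [sub_smul, one_smul]
    rw [this, map_smul_eq_mul, hp2, mul_one]
  have tri : p (x2 - μ ^ n • x2) ≤ p (x2 - x1) + p (x1 - μ ^ n • x2) := by
    have hx : x2 - μ ^ n • x2 = (x2 - x1) + (x1 - μ ^ n • x2) := by abel
    rw [hx]
    exact map_add_le_add _ _ _
  have hrev : p (x2 - x1) = p (x1 - x2) := map_sub_rev _ _ _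
  have hle : p ((T ^ n) (x1 - x2)) ≤ p (x1 - x2) := hT n _
  rw [e3, hrev] at tri
  rw [e2] at hle
  linarith

theorem stmt_19 {E : Type*} [AddCommGroup E] [Module ℂ E] [UniformSpace E]
    [IsUniformAddGroup E] [ContinuousSMul ℂ E] [CompleteSpace E]
    [TopologicalSpace.MetrizableSpace E] [TopologicalSpace.SeparableSpace E]
    (q : ℕ → Seminorm ℂ E) (hq : WithSeminorms q) (hmono : Monotone q)
    (T : E →L[ℂ] E)
    (hT : ∀ (j n : ℕ) (x : E), q j ((T ^ n) x) ≤ q j x) :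
    {lam : ℂ | ‖lam‖ = 1 ∧ ∃ x : E, x ≠ 0 ∧ T x = lam • x}.Countable := by
  letI : MetricSpace E := TopologicalSpace.metrizableSpaceMetric E
  haveI : T1Space E := inferInstance
  obtain ⟨D, hDc, hDd⟩ := TopologicalSpace.exists_countable_dense E
  have hsub : {lam : ℂ | ‖lam‖ = 1 ∧ ∃ x : E, x ≠ 0 ∧ T x = lam • x} ⊆
      ⋃ j : ℕ, ⋃ d ∈ D, {lam : ℂ | ‖lam‖ = 1 ∧
        ∃ x : E, T x = lam • x ∧ q j x = 1 ∧ q j (x - d) < 1 / 4} := by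
    rintro lam ⟨hnorm, x, hx0, hTx⟩
    obtain ⟨j, hj⟩ := hq.separating_of_T1 x hx0
    have hjpos : 0 < q j x := lt_of_le_of_ne (apply_nonneg _ _) (Ne.symm hj)
    set y := (((q j x : ℝ) : ℂ))⁻¹ • x with hy
    have hqy : q j y = 1 := by
      rw [hy, map_smul_eq_mul, norm_inv, Complex.norm_real, Real.norm_eq_abs,
        abs_of_pos hjpos, inv_mul_cancel₀ hjpos.ne']
    have hTy : T y = lam • y := by
      rw [hy, map_smul, hTx, smul_comm]
    have hopen : IsOpen {z : E | q j (y - z) < 1 / 4} := by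
      have hc : Continuous fun z : E => q j (y - z) :=
        (hq.continuous_seminorm j).comp (continuous_const.sub continuous_id)
      exact isOpen_lt hc continuous_const
    have hney : ({z : E | q j (y - z) < 1 / 4}).Nonempty := ⟨y, by simp⟩
    obtain ⟨d, hdmem, hdD⟩ := hDd.exists_mem_open hopen hney
    refine Set.mem_iUnion.mpr ⟨j, Set.mem_biUnion hdmem ?_⟩
    exact ⟨hnorm, y, hTy, hqy, hdD⟩
  refine Set.Countable.mono hsub ?_
  refine Set.countable_iUnion fun j => hDc.biUnion fun d _ => ?_
  apply Set.Subsingleton.countable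
  rintro l1 ⟨h1, x1, hx1, hq1, hd1⟩ l2 ⟨h2, x2, hx2, hq2, hd2⟩
  by_contra hlne
  have hsep := sep_lemma (q j) T (fun n x => hT j n x) h1 h2 hlne hx1 hx2 hq1 hq2
  have htri : q j (x1 - x2) ≤ q j (x1 - d) + q j (x2 - d) := by
    have hx : x1 - x2 = (x1 - d) + (d - x2) := by abel
    calc q j (x1 - x2) ≤ q j (x1 - d) + q j (d - x2) := by
          rw [hx]; exact map_add_le_add _ _ _
      _ = q j (x1 - d) + q j (x2 - d) := by rw [map_sub_rev (q j) d x2]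
  linarith
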